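/- arXiv:2412.16621 — 2 statements merged into one kernel-verified Lean document; each statement's English description precedes it below -/
import Mathlib

section
/- For any integers a₁, a₂ ≥ 2 with a₁ ≠ a₂, the real numbers log(a₁(a₁−1)) and log(a₂(a₂−1)) are linearly independent over ℤ; that is, for integers m, n, if m·log(a₁(a₁−1)) + n·log(a₂(a₂−1)) = 0 then m = n = 0. -/
lemma aux_coprime (b : ℕ) : Nat.Coprime (b + 2) (b + 1) := by
  have h0 : Nat.Coprime (1 + (b + 1)) (b + 1) :=
    Nat.coprime_add_self_left.mpr (Nat.coprime_one_left _)
  have he : 1 + (b + 1) = b + 2 := by omega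
  rwa [he] at h0

-- a(a-1) is never a perfect k-th power for k ≥ 2
lemma aux_not_pow (a k z : ℕ) (ha : 2 ≤ a) (hk : 2 ≤ k) :
    z ^ k ≠ a * (a - 1) := by
  intro hzk
  obtain ⟨b, rfl⟩ : ∃ b, a = b + 2 := ⟨a - 2, by omega⟩
  have hco : Nat.Coprime (b + 2) (b + 1) := aux_coprime b
  have hx : (b + 2) * (b + 1) = z ^ k := by
    simpa using hzk.symm
  obtain ⟨u, hu⟩ := exists_eq_pow_of_mul_eq_pow (Nat.isUnit_iff.2 hco) hx
  obtain ⟨v, hv⟩ := exists_eq_pow_of_mul_eq_pow (Nat.isUnit_iff.2 hco.symm)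
    (by linarith [hx] : (b + 1) * (b + 2) = z ^ k)
  have huv : u ^ k = v ^ k + 1 := by omega
  have hv1 : 1 ≤ v := by
    rcases Nat.eq_zero_or_pos v with h0 | h0
    · rw [h0, zero_pow (by omega : k ≠ 0)] at hv; omega
    · exact h0
  have hvu : v < u := by
    have h5 : v ^ k < u ^ k := by omega
    exact lt_of_pow_lt_pow_left₀ k (Nat.zero_le _) h5
  have hle : (v + 1) ^ k ≤ u ^ k := Nat.pow_le_pow_left (by omega) k
  obtain ⟨j, rfl⟩ : ∃ j, k = j + 2 := ⟨k - 2, by omega⟩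
  have h1 : v ^ j ≤ (v + 1) ^ j := Nat.pow_le_pow_left (by omega) j
  have h2 : (v + 1) ^ (j + 2) = (v + 1) ^ j * (v + 1) ^ 2 := by ring
  have h3 : v ^ (j + 2) = v ^ j * v ^ 2 := by ring
  have h4 : 1 ≤ v ^ j := Nat.one_le_pow _ _ (by omega)
  nlinarith [h1, h2, h3, h4, huv, hle]

lemma aux_inj (a₁ a₂ : ℕ) (h₁ : 2 ≤ a₁) (h₂ : 2 ≤ a₂)
    (h : a₁ * (a₁ - 1) = a₂ * (a₂ - 1)) : a₁ = a₂ := by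
  obtain ⟨b, rfl⟩ : ∃ b, a₁ = b + 2 := ⟨a₁ - 2, by omega⟩
  obtain ⟨c, rfl⟩ : ∃ c, a₂ = c + 2 := ⟨a₂ - 2, by omega⟩
  have h' : (b + 2) * (b + 1) = (c + 2) * (c + 1) := by
    simpa using h
  rcases lt_trichotomy b c with hlt | heq | hlt
  · nlinarith
  · omega
  · nlinarith

theorem log_consecutive_products_linearIndependent
    (a₁ a₂ : ℕ) (h₁ : 2 ≤ a₁) (h₂ : 2 ≤ a₂) (hne : a₁ ≠ a₂)
    (m n : ℤ)
    (h : (m : ℝ) * Real.log ((a₁ : ℝ) * ((a₁ : ℝ) - 1))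
        + (n : ℝ) * Real.log ((a₂ : ℝ) * ((a₂ : ℝ) - 1)) = 0) :
    m = 0 ∧ n = 0 := by
  set x : ℕ := a₁ * (a₁ - 1) with hxdef
  set y : ℕ := a₂ * (a₂ - 1) with hydef
  have hx2 : 2 ≤ x := by
    calc 2 = 2 * 1 := by norm_num
    _ ≤ a₁ * (a₁ - 1) := Nat.mul_le_mul h₁ (by omega)
  have hy2 : 2 ≤ y := by
    calc 2 = 2 * 1 := by norm_num
    _ ≤ a₂ * (a₂ - 1) := Nat.mul_le_mul h₂ (by omega)
  have hXcast : ((x : ℕ) : ℝ) = (a₁ : ℝ) * ((a₁ : ℝ) - 1) := by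
    rw [hxdef]; push_cast [Nat.cast_sub (by omega : 1 ≤ a₁)]; ring
  have hYcast : ((y : ℕ) : ℝ) = (a₂ : ℝ) * ((a₂ : ℝ) - 1) := by
    rw [hydef]; push_cast [Nat.cast_sub (by omega : 1 ≤ a₂)]; ring
  rw [← hXcast, ← hYcast] at h
  have hX1 : (1 : ℝ) < (x : ℝ) := by exact_mod_cast hx2.trans_lt' one_lt_two
  have hY1 : (1 : ℝ) < (y : ℝ) := by exact_mod_cast hy2.trans_lt' one_lt_two
  have hlogX : 0 < Real.log x := Real.log_pos hX1
  have hlogY : 0 < Real.log y := Real.log_pos hY1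
  by_cases hm : m = 0
  · subst hm
    simp only [Int.cast_zero, zero_mul, zero_add, mul_eq_zero] at h
    rcases h with h | h
    · exact ⟨rfl, by exact_mod_cast h⟩
    · exact absurd h hlogY.ne'
  by_cases hn : n = 0
  · subst hn
    simp only [Int.cast_zero, zero_mul, add_zero, mul_eq_zero] at h
    rcases h with h | h
    · exact ⟨by exact_mod_cast h, rfl⟩
    · exact absurd h hlogX.ne'
  exfalso
  -- |m| log x = |n| log y
  have habs : |(m : ℝ)| * Real.log x = |(n : ℝ)| * Real.log y := by
    have h' : (m : ℝ) * Real.log x = -((n : ℝ) * Real.log y) := by linarith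
    have := congrArg abs h'
    rwa [abs_neg, abs_mul, abs_mul, abs_of_pos hlogX, abs_of_pos hlogY] at this
  set M : ℕ := m.natAbs with hMdef
  set N : ℕ := n.natAbs with hNdef
  have habsM : ((M : ℕ) : ℝ) * Real.log x = ((N : ℕ) : ℝ) * Real.log y := by
    rw [hMdef, hNdef]; push_cast [Nat.cast_natAbs]; exact habs
  have hlogpow : Real.log ((x : ℝ) ^ M) = Real.log ((y : ℝ) ^ N) := by
    rw [Real.log_pow, Real.log_pow]; exact_mod_cast habsM
  have hpowR : ((x : ℝ)) ^ M = ((y : ℝ)) ^ N := by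
    have hx0 : (0 : ℝ) < (x : ℝ) ^ M := by positivity
    have hy0 : (0 : ℝ) < (y : ℝ) ^ N := by positivity
    rw [← Real.exp_log hx0, ← Real.exp_log hy0, hlogpow]
  have hpow : x ^ M = y ^ N := by exact_mod_cast hpowR
  have hM0 : M ≠ 0 := Int.natAbs_ne_zero.mpr hm
  have hN0 : N ≠ 0 := Int.natAbs_ne_zero.mpr hn
  set d : ℕ := Nat.gcd M N with hddef
  have hd0 : 0 < d := Nat.gcd_pos_of_pos_left N (Nat.pos_of_ne_zero hM0)
  set p : ℕ := M / d with hpdef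
  set q : ℕ := N / d with hqdef
  have hpd : p * d = M := Nat.div_mul_cancel (Nat.gcd_dvd_left M N)
  have hqd : q * d = N := Nat.div_mul_cancel (Nat.gcd_dvd_right M N)
  have hpq : Nat.Coprime p q := Nat.coprime_div_gcd_div_gcd hd0
  have hp0 : p ≠ 0 := by intro h0; rw [h0, zero_mul] at hpd; exact hM0 hpd.symm
  have hq0 : q ≠ 0 := by intro h0; rw [h0, zero_mul] at hqd; exact hN0 hqd.symm
  have hxy : x ^ p = y ^ q := by
    apply Nat.pow_left_injective hd0.ne'
    simp only []
    rw [← pow_mul, ← pow_mul, hpd, hqd, hpow]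
  -- move to ℚ and extract common base
  have hxyQ : ((x : ℚ)) ^ p = ((y : ℚ)) ^ q := by exact_mod_cast hxy
  obtain ⟨c, hcx, hcy⟩ := (pow_eq_pow_iff_of_coprime hpq).1 hxyQ
  have hcden : c.den = 1 := by
    have hh := congrArg Rat.den hcx
    simp only [Rat.den_natCast, Rat.den_pow] at hh
    exact (pow_eq_one_iff_left hq0).1 hh.symm
  have hnumx : c.num ^ q = (x : ℤ) := by
    have hh := congrArg Rat.num hcx
    simp only [Rat.num_natCast, Rat.num_pow] at hh
    exact hh.symm
  have hnumy : c.num ^ p = (y : ℤ) := by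
    have hh := congrArg Rat.num hcy
    simp only [Rat.num_natCast, Rat.num_pow] at hh
    exact hh.symm
  set z : ℕ := c.num.natAbs with hzdef
  have hzx : z ^ q = x := by
    have := congrArg Int.natAbs hnumx
    simpa [Int.natAbs_pow] using this
  have hzy : z ^ p = y := by
    have := congrArg Int.natAbs hnumy
    simpa [Int.natAbs_pow] using this
  rw [hxdef] at hzx
  rw [hydef] at hzy
  clear_value d p q
  by_cases hq1 : 2 ≤ q
  · exact aux_not_pow a₁ q z h₁ hq1 hzx
  · have hq1' : q = 1 := by omega
    by_cases hp1 : 2 ≤ p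
    · exact aux_not_pow a₂ p z h₂ hp1 hzy
    · have hp1' : p = 1 := by omega
      have hxyeq : a₁ * (a₁ - 1) = a₂ * (a₂ - 1) := by
        rw [← hzx, ← hzy, hp1', hq1']
      exact hne (aux_inj a₁ a₂ h₁ h₂ hxyeq)
end

section
/- Let r_j, r_k ∈ (0,1) and suppose θ := log r_j / log r_k is non-Liouville of degree l ≥ 2, i.e., there is c > 0 with |θ − p/q| ≥ c/q^l for all p ∈ ℤ, q ∈ ℕ. Let p_j, p_k > 0 and let λ be a probability measure on ℝ⁺ containing atoms of masses p_j and p_k at −log r_j and −log r_k respectively (plus possibly other nonnegative atoms). Then liminf_{|b|→∞} |b|^{2l−2}·|1 − ℒλ(ib)| > 0; that is, λ is (2l−2)-weakly diophantine. -/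
open MeasureTheory

open Real in
private lemma aux_one_sub_cos {x : ℝ} (hx : |x| ≤ π) :
    2 / π ^ 2 * x ^ 2 ≤ 1 - Real.cos x := by
  have := Real.cos_le_one_sub_mul_cos_sq hx
  linarith

private lemma aux_atoms_le_integral (μ : Measure ℝ) [IsProbabilityMeasure μ]
    (f : ℝ → ℝ) (hf : Continuous f) (h0 : ∀ x, 0 ≤ f x) (h2 : ∀ x, f x ≤ 2)
    (a b : ℝ) (hab : a ≠ b) :
    f a * (μ {a}).toReal + f b * (μ {b}).toReal ≤ ∫ x, f x ∂μ := by
  have hint : Integrable f μ := by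
    refine Integrable.mono' (integrable_const (2:ℝ)) hf.aestronglyMeasurable ?_
    exact Filter.Eventually.of_forall fun x => by
      rw [Real.norm_eq_abs, abs_le]; exact ⟨by linarith [h0 x], h2 x⟩
  have hsingle : ∀ t : ℝ, ∫ x in ({t} : Set ℝ), f x ∂μ = f t * (μ {t}).toReal := by
    intro t
    rw [Measure.restrict_singleton, integral_smul_measure, integral_dirac]
    simp [mul_comm]
  have hunion : ∫ x in ({a} ∪ {b} : Set ℝ), f x ∂μ
      = f a * (μ {a}).toReal + f b * (μ {b}).toReal := by
    rw [setIntegral_union (by simpa using hab) (measurableSet_singleton b)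
      hint.integrableOn hint.integrableOn, hsingle, hsingle]
  calc f a * (μ {a}).toReal + f b * (μ {b}).toReal
      = ∫ x in ({a} ∪ {b} : Set ℝ), f x ∂μ := hunion.symm
    _ ≤ ∫ x, f x ∂μ :=
        setIntegral_le_integral hint (Filter.Eventually.of_forall h0)

set_option maxHeartbeats 1000000 in
theorem weakly_diophantine_of_nonLiouville
    (rj rk : ℝ) (hrj : rj ∈ Set.Ioo (0 : ℝ) 1) (hrk : rk ∈ Set.Ioo (0 : ℝ) 1)
    (l : ℝ) (hl : 2 ≤ l) (c : ℝ) (hc : 0 < c)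
    (hθ : ∀ (p : ℤ) (q : ℕ), 0 < q →
      c / (q : ℝ) ^ l ≤ |Real.log rj / Real.log rk - (p : ℝ) / (q : ℝ)|)
    (pj pk : ℝ) (hpj : 0 < pj) (hpk : 0 < pk)
    (lam : Measure ℝ) [IsProbabilityMeasure lam]
    (hpos : lam (Set.Iic 0) = 0)
    (hatomj : lam {-Real.log rj} = ENNReal.ofReal pj)
    (hatomk : lam {-Real.log rk} = ENNReal.ofReal pk) :
    ∃ ε > 0, ∃ B : ℝ, ∀ b : ℝ, B ≤ |b| →
      ε ≤ |b| ^ (2 * l - 2) *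
        ‖(1 : ℂ) - ∫ x : ℝ, Complex.exp (-(Complex.I * (b : ℂ) * (x : ℂ))) ∂lam‖ := by
  obtain ⟨hrj0, hrj1⟩ := hrj
  obtain ⟨hrk0, hrk1⟩ := hrk
  have hπ : (0:ℝ) < Real.pi := Real.pi_pos
  set tj : ℝ := -Real.log rj with htjdef
  set tk : ℝ := -Real.log rk with htkdef
  have htj0 : 0 < tj := by
    have := Real.log_neg hrj0 hrj1; rw [htjdef]; linarith
  have htk0 : 0 < tk := by
    have := Real.log_neg hrk0 hrk1; rw [htkdef]; linarith
  have hθeq : Real.log rj / Real.log rk = tj / tk := by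
    rw [htjdef, htkdef, neg_div_neg_eq]
  clear_value tj tk
  -- tj ≠ tk
  have htjk : tj ≠ tk := by
    intro h
    have h1 := hθ 1 1 one_pos
    rw [hθeq, h] at h1
    simp [Real.one_rpow, div_self (ne_of_gt htk0)] at h1
    linarith
  -- constants
  set Tpow : ℝ := (tk / Real.pi) ^ (l - 1) with hTpowdef
  have hTpow0 : 0 < Tpow := Real.rpow_pos_of_pos (div_pos htk0 hπ) _
  clear_value Tpow
  set C : ℝ := 2 * Real.pi * c * tk / ((tj + tk) * Tpow) with hCdef
  have hC0 : 0 < C :=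
    div_pos (mul_pos (mul_pos (by positivity) hc) htk0)
      (mul_pos (by linarith) hTpow0)
  clear_value C
  set K : ℝ := 2 / Real.pi ^ 2 * min pj pk with hKdef
  have hminp : 0 < min pj pk := lt_min hpj hpk
  have hK0 : 0 < K := by rw [hKdef]; positivity
  clear_value K
  refine ⟨K * C ^ 2, by positivity, 3 * Real.pi / tk, ?_⟩
  intro b hb
  set a : ℝ := |b| with hadef
  have ha0 : 0 < a := lt_of_lt_of_le (div_pos (by positivity) htk0) hb
  have hak : 3 * Real.pi ≤ a * tk := by
    rw [div_le_iff₀ htk0] at hb; linarith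
  -- the integrand and its real part
  set g : ℝ → ℝ := fun x => 1 - Real.cos (a * x) with hgdef
  have hgcont : Continuous g := by
    rw [hgdef]
    exact continuous_const.sub (Real.continuous_cos.comp (continuous_const.mul continuous_id))
  have hg0 : ∀ x, 0 ≤ g x := fun x => by
    rw [hgdef]; simp only; linarith [Real.cos_le_one (a * x)]
  have hg2 : ∀ x, g x ≤ 2 := fun x => by
    rw [hgdef]; simp only; linarith [Real.neg_one_le_cos (a * x)]
  have hre : ∀ x : ℝ, (Complex.exp (-(Complex.I * (b:ℂ) * (x:ℂ)))).re = Real.cos (a * x) := by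
    intro x
    have h1 : -(Complex.I * (b:ℂ) * (x:ℂ)) = ((-(b * x) : ℝ) : ℂ) * Complex.I := by
      push_cast; ring
    rw [h1, Complex.exp_ofReal_mul_I_re, Real.cos_neg]
    rcases abs_cases b with ⟨h, _⟩ | ⟨h, _⟩
    · rw [hadef, h]
    · rw [hadef, h, neg_mul, Real.cos_neg]
  have hexpcont : Continuous fun x : ℝ => Complex.exp (-(Complex.I * (b:ℂ) * (x:ℂ))) := by
    fun_prop
  have hexpint : Integrable (fun x : ℝ => Complex.exp (-(Complex.I * (b:ℂ) * (x:ℂ)))) lam := by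
    refine Integrable.mono' (integrable_const (1:ℝ)) hexpcont.aestronglyMeasurable ?_
    refine Filter.Eventually.of_forall fun x => ?_
    rw [Complex.norm_exp]
    simp [Complex.mul_re]
  have hcosint : Integrable (fun x : ℝ => Real.cos (a * x)) lam := by
    refine Integrable.mono' (integrable_const (1:ℝ))
      (Real.continuous_cos.comp (continuous_const.mul continuous_id)).aestronglyMeasurable ?_
    exact Filter.Eventually.of_forall fun x => by
      rw [Real.norm_eq_abs]; exact Real.abs_cos_le_one _
  set I : ℂ := ∫ x : ℝ, Complex.exp (-(Complex.I * (b:ℂ) * (x:ℂ))) ∂lam with hIdef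
  have hIre : I.re = ∫ x : ℝ, Real.cos (a * x) ∂lam := by
    calc I.re = RCLike.re I := rfl
      _ = ∫ x : ℝ, RCLike.re (Complex.exp (-(Complex.I * (b:ℂ) * (x:ℂ)))) ∂lam :=
          (integral_re hexpint).symm
      _ = ∫ x : ℝ, Real.cos (a * x) ∂lam :=
          integral_congr_ae (Filter.Eventually.of_forall fun x => by
            simpa using hre x)
  have hintg : ∫ x, g x ∂lam = 1 - ∫ x : ℝ, Real.cos (a * x) ∂lam := by
    rw [hgdef]
    rw [integral_sub (integrable_const 1) hcosint, integral_const]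
    simp
  have hnorm1 : ∫ x, g x ∂lam ≤ ‖(1:ℂ) - I‖ := by
    have h1 : ((1:ℂ) - I).re = ∫ x, g x ∂lam := by
      rw [Complex.sub_re, Complex.one_re, hIre, hintg]
    calc ∫ x, g x ∂lam = ((1:ℂ) - I).re := h1.symm
      _ ≤ ‖(1:ℂ) - I‖ := by exact Complex.re_le_norm _
  -- atom bound
  have hatom : g tj * pj + g tk * pk ≤ ∫ x, g x ∂lam := by
    have := aux_atoms_le_integral lam g hgcont hg0 hg2 tj tk htjk
    rwa [hatomj, hatomk, ENNReal.toReal_ofReal hpj.le, ENNReal.toReal_ofReal hpk.le] at this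
  -- diophantine part
  set m : ℤ := round (a * tj / (2 * Real.pi)) with hmdef
  set n : ℤ := round (a * tk / (2 * Real.pi)) with hndef
  have hrndj := abs_sub_round (a * tj / (2 * Real.pi))
  have hrndk' := abs_sub_round (a * tk / (2 * Real.pi))
  rw [← hmdef] at hrndj
  rw [← hndef] at hrndk'
  clear_value m n
  set ej : ℝ := a * tj - 2 * Real.pi * m with hejdef
  set ek : ℝ := a * tk - 2 * Real.pi * n with hekdef
  have hejbound : |ej| ≤ Real.pi := by
    have h2 : ej = (2 * Real.pi) * (a * tj / (2 * Real.pi) - m) := by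
      field_simp [hejdef]
      exact hejdef
    rw [h2, abs_mul, abs_of_pos (by positivity : (0:ℝ) < 2 * Real.pi)]
    calc 2 * Real.pi * |a * tj / (2 * Real.pi) - (m:ℝ)| ≤ 2 * Real.pi * (1/2) :=
          mul_le_mul_of_nonneg_left hrndj (by positivity)
      _ = Real.pi := by ring
  have hekbound : |ek| ≤ Real.pi := by
    have h2 : ek = (2 * Real.pi) * (a * tk / (2 * Real.pi) - n) := by
      field_simp [hekdef]
      exact hekdef
    rw [h2, abs_mul, abs_of_pos (by positivity : (0:ℝ) < 2 * Real.pi)]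
    calc 2 * Real.pi * |a * tk / (2 * Real.pi) - (n:ℝ)| ≤ 2 * Real.pi * (1/2) :=
          mul_le_mul_of_nonneg_left hrndk' (by positivity)
      _ = Real.pi := by ring
  clear_value ej ek
  have hx32 : 3/2 ≤ a * tk / (2 * Real.pi) := by
    rw [le_div_iff₀ (by positivity)]; linarith only [hak]
  have hrndk := abs_le.mp hrndk'
  have hn1 : (1:ℝ) ≤ (n:ℝ) := by
    linarith only [hrndk.2, hx32]
  have hn1' : 1 ≤ n := by exact_mod_cast hn1
  have hn0 : (0:ℝ) < (n:ℝ) := by linarith only [hn1]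
  have hnle : (n:ℝ) ≤ a * tk / Real.pi := by
    have h1 := hrndk.1
    have h2 : a * tk / (2 * Real.pi) + a * tk / (2 * Real.pi) = a * tk / Real.pi := by
      field_simp; ring
    linarith only [h1, h2, hx32]
  set M : ℝ := max |ej| |ek| with hMdef
  have hM0 : 0 ≤ M := le_trans (abs_nonneg ej) (le_max_left _ _)
  -- apply the diophantine hypothesis
  have hcastn : ((n.toNat : ℕ) : ℝ) = (n:ℝ) := by
    exact_mod_cast congrArg (Int.cast : ℤ → ℝ) (Int.toNat_of_nonneg (by linarith))
  have hqpos : 0 < n.toNat := by omega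
  have hdio : c / (n:ℝ) ^ l ≤ |tj / tk - (m:ℝ) / (n:ℝ)| := by
    have := hθ m n.toNat hqpos
    rwa [hθeq, hcastn] at this
  -- identity for the difference
  have hden0 : (0:ℝ) < 2 * Real.pi * tk * (n:ℝ) := mul_pos (by positivity) hn0
  have hid : tj / tk - (m:ℝ) / (n:ℝ) = (tk * ej - tj * ek) / (2 * Real.pi * tk * (n:ℝ)) := by
    have h3 : tk * ej - tj * ek = 2 * Real.pi * (tj * n - tk * m) := by
      rw [hejdef, hekdef]; ring
    rw [h3, show (2 * Real.pi * tk * (n:ℝ)) = (2 * Real.pi) * (tk * (n:ℝ)) by ring,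
      mul_div_mul_left _ _ (by positivity : (0:ℝ) < 2 * Real.pi).ne',
      div_sub_div _ _ (ne_of_gt htk0) (ne_of_gt hn0)]
  have hnum : |tk * ej - tj * ek| ≤ (tj + tk) * M := by
    calc |tk * ej - tj * ek| ≤ |tk * ej| + |tj * ek| := abs_sub _ _
      _ = tk * |ej| + tj * |ek| := by
          rw [abs_mul, abs_mul, abs_of_pos htk0, abs_of_pos htj0]
      _ ≤ tk * M + tj * M := by
          gcongr
          · exact le_max_left _ _
          · exact le_max_right _ _
      _ = (tj + tk) * M := by ring
  have habs : |tj / tk - (m:ℝ) / (n:ℝ)| ≤ (tj + tk) * M / (2 * Real.pi * tk * (n:ℝ)) := by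
    rw [hid, abs_div, abs_of_pos hden0]
    exact div_le_div_of_nonneg_right hnum hden0.le |>.trans_eq rfl
  -- extract lower bound on M
  have hNpow0 : (0:ℝ) < (n:ℝ) ^ (l - 1) := Real.rpow_pos_of_pos hn0 _
  have hNl : (n:ℝ) ^ l = (n:ℝ) ^ (l - 1) * (n:ℝ) := by
    nth_rewrite 1 [show l = (l - 1) + 1 by ring]
    rw [Real.rpow_add hn0, Real.rpow_one]
  have hcross : c * (2 * Real.pi * tk * (n:ℝ)) ≤ (tj + tk) * M * ((n:ℝ) ^ (l - 1) * (n:ℝ)) := by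
    have h := hdio.trans habs
    rw [div_le_div_iff₀ (by rw [hNl]; exact mul_pos hNpow0 hn0) hden0, hNl] at h
    linarith only [h]
  have hcross2 : c * (2 * Real.pi * tk) ≤ (tj + tk) * M * (n:ℝ) ^ (l - 1) := by
    refine le_of_mul_le_mul_right ?_ hn0
    calc c * (2 * Real.pi * tk) * (n:ℝ) = c * (2 * Real.pi * tk * (n:ℝ)) := by ring
      _ ≤ (tj + tk) * M * ((n:ℝ) ^ (l - 1) * (n:ℝ)) := hcross
      _ = (tj + tk) * M * (n:ℝ) ^ (l - 1) * (n:ℝ) := by ring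
  have hApow0 : (0:ℝ) < a ^ (l - 1) := Real.rpow_pos_of_pos ha0 _
  have hNpowle : (n:ℝ) ^ (l - 1) ≤ a ^ (l - 1) * Tpow := by
    rw [hTpowdef, ← Real.mul_rpow ha0.le (div_pos htk0 hπ).le]
    apply Real.rpow_le_rpow (by linarith) ?_ (by linarith)
    calc (n:ℝ) ≤ a * tk / Real.pi := hnle
      _ = a * (tk / Real.pi) := by ring
  have hMD : C / a ^ (l - 1) ≤ M := by
    have h4 : (tj + tk) * M * ((n:ℝ) ^ (l - 1)) ≤ (tj + tk) * M * (a ^ (l - 1) * Tpow) :=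
      mul_le_mul_of_nonneg_left hNpowle (mul_nonneg (by linarith : (0:ℝ) ≤ tj + tk) hM0)
    have h5 : c * (2 * Real.pi * tk) ≤ (tj + tk) * M * (a ^ (l - 1) * Tpow) := hcross2.trans h4
    rw [div_le_iff₀ hApow0, hCdef, div_le_iff₀ (mul_pos (by linarith : (0:ℝ) < tj + tk) hTpow0)]
    linarith only [h5]
  -- lower bounds on the atoms' contribution
  have hgj : 2 / Real.pi ^ 2 * ej ^ 2 ≤ g tj := by
    have h1 : a * tj = ej + (m:ℤ) * (2 * Real.pi) := by rw [hejdef]; push_cast; ring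
    have h2 : Real.cos (a * tj) = Real.cos ej := by
      rw [h1, Real.cos_add_int_mul_two_pi]
    rw [hgdef]; simp only; rw [h2]
    exact aux_one_sub_cos hejbound
  have hgk : 2 / Real.pi ^ 2 * ek ^ 2 ≤ g tk := by
    have h1 : a * tk = ek + (n:ℤ) * (2 * Real.pi) := by rw [hekdef]; push_cast; ring
    have h2 : Real.cos (a * tk) = Real.cos ek := by
      rw [h1, Real.cos_add_int_mul_two_pi]
    rw [hgdef]; simp only; rw [h2]
    exact aux_one_sub_cos hekbound
  have hM2 : M ^ 2 ≤ ej ^ 2 + ek ^ 2 := by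
    rcases max_cases |ej| |ek| with ⟨h, _⟩ | ⟨h, _⟩ <;> rw [hMdef, h, sq_abs]
    · linarith only [sq_nonneg ek]
    · linarith only [sq_nonneg ej]
  have hKM : K * M ^ 2 ≤ ‖(1:ℂ) - I‖ := by
    refine le_trans ?_ (hatom.trans hnorm1)
    calc K * M ^ 2 ≤ K * (ej ^ 2 + ek ^ 2) :=
          mul_le_mul_of_nonneg_left hM2 hK0.le
      _ = 2 / Real.pi ^ 2 * (min pj pk * ej ^ 2) + 2 / Real.pi ^ 2 * (min pj pk * ek ^ 2) := by
          rw [hKdef]; ring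
      _ ≤ 2 / Real.pi ^ 2 * (pj * ej ^ 2) + 2 / Real.pi ^ 2 * (pk * ek ^ 2) := by
          gcongr
          · exact min_le_left _ _
          · exact min_le_right _ _
      _ = (2 / Real.pi ^ 2 * ej ^ 2) * pj + (2 / Real.pi ^ 2 * ek ^ 2) * pk := by ring
      _ ≤ g tj * pj + g tk * pk :=
          add_le_add (mul_le_mul_of_nonneg_right hgj hpj.le)
            (mul_le_mul_of_nonneg_right hgk hpk.le)
  -- final computation with rpow arithmetic
  have hA2 : a ^ (l - 1) * a ^ (l - 1) = a ^ (2 * l - 2) := by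
    rw [← Real.rpow_add ha0]; congr 1; ring
  have haX0 : (0:ℝ) < a ^ (2 * l - 2) := Real.rpow_pos_of_pos ha0 _
  have hDM2 : C ^ 2 / a ^ (2 * l - 2) ≤ M ^ 2 := by
    have h1 : (C / a ^ (l - 1)) ^ 2 ≤ M ^ 2 :=
      pow_le_pow_left₀ (div_nonneg hC0.le hApow0.le) hMD 2
    calc C ^ 2 / a ^ (2 * l - 2) = (C / a ^ (l - 1)) ^ 2 := by
          rw [div_pow, pow_two (a ^ (l - 1)), hA2]
      _ ≤ M ^ 2 := h1
  calc K * C ^ 2 = a ^ (2 * l - 2) * (K * (C ^ 2 / a ^ (2 * l - 2))) := by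
        rw [mul_comm (a ^ (2 * l - 2)) _, mul_assoc, div_mul_cancel₀ _ (ne_of_gt haX0)]
    _ ≤ a ^ (2 * l - 2) * (K * M ^ 2) :=
        mul_le_mul_of_nonneg_left (mul_le_mul_of_nonneg_left hDM2 hK0.le) haX0.le
    _ ≤ a ^ (2 * l - 2) * ‖(1:ℂ) - I‖ :=
        mul_le_mul_of_nonneg_left hKM haX0.le
end
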